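/- Along the trisectrix limaçon solution, both relative distances between alternate bodies are constant and equal to 1: ‖r₁(t) − r₃(t)‖ = 1 and ‖r₂(t) − r₄(t)‖ = 1 for all t ∈ ℝ. -/

import Mathlib

noncomputable section

/-- The Euclidean plane. -/
abbrev Plane : Type := EuclideanSpace ℝ (Fin 2)

/-- A solution of the planar four-body system with pairwise quadratic potential
`V = (mω²/4)(2‖r₁−r₂‖² + 2‖r₂−r₃‖² + 2‖r₃−r₄‖² + 2‖r₁−r₄‖² − ‖r₁−r₃‖² − ‖r₂−r₄‖²)`:
four twice differentiable curves satisfying Newton's equations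
`rᵢ'' = −ω²((rᵢ − r_{i+1}) + (rᵢ − r_{i−1}) − ½(rᵢ − r_{i+2}))` (indices mod 4). -/
def IsFourBodySolution (ω : ℝ) (r₁ r₂ r₃ r₄ : ℝ → Plane) : Prop :=
  (Differentiable ℝ r₁ ∧ Differentiable ℝ (deriv r₁)) ∧
  (Differentiable ℝ r₂ ∧ Differentiable ℝ (deriv r₂)) ∧
  (Differentiable ℝ r₃ ∧ Differentiable ℝ (deriv r₃)) ∧
  (Differentiable ℝ r₄ ∧ Differentiable ℝ (deriv r₄)) ∧
  (∀ t : ℝ, deriv (deriv r₁) t =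
    (-(ω ^ 2)) • ((r₁ t - r₂ t) + (r₁ t - r₄ t) - (1 / 2 : ℝ) • (r₁ t - r₃ t))) ∧
  (∀ t : ℝ, deriv (deriv r₂) t =
    (-(ω ^ 2)) • ((r₂ t - r₃ t) + (r₂ t - r₁ t) - (1 / 2 : ℝ) • (r₂ t - r₄ t))) ∧
  (∀ t : ℝ, deriv (deriv r₃) t =
    (-(ω ^ 2)) • ((r₃ t - r₄ t) + (r₃ t - r₂ t) - (1 / 2 : ℝ) • (r₃ t - r₁ t))) ∧
  (∀ t : ℝ, deriv (deriv r₄) t =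
    (-(ω ^ 2)) • ((r₄ t - r₁ t) + (r₄ t - r₃ t) - (1 / 2 : ℝ) • (r₄ t - r₂ t)))

/-- The trisectrix limaçon curve
`r(t) = (½(cos ωt + cos 2ωt), ½(sin ωt + sin 2ωt))`. -/
def limax (ω : ℝ) : ℝ → Plane := fun t =>
  (WithLp.equiv 2 (Fin 2 → ℝ)).symm
    ![(Real.cos (ω * t) + Real.cos (2 * ω * t)) / 2,
      (Real.sin (ω * t) + Real.sin (2 * ω * t)) / 2]

lemma norm_one_of_sq (x : Plane) (h : (x 0)^2 + (x 1)^2 = 1) : ‖x‖ = 1 := by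
  rw [EuclideanSpace.norm_eq]
  simp [Fin.sum_univ_two, Real.norm_eq_abs, sq_abs, h]

/-- Along the trisectrix limaçon solution `rₖ(t) = r(t + (k−1)τ)`,
`τ = π/(2ω)`, the relative distances between alternate bodies are constant, equal to 1:
`‖r₁(t) − r₃(t)‖ = ‖r₂(t) − r₄(t)‖ = 1`. -/
theorem limax_alternate_distances_one (m ω : ℝ) (hm : 0 < m) (hω : 0 < ω) :
    ∀ t : ℝ,
      ‖limax ω t - limax ω (t + 2 * (Real.pi / (2 * ω)))‖ = 1
      ∧ ‖limax ω (t + Real.pi / (2 * ω)) - limax ω (t + 3 * (Real.pi / (2 * ω)))‖ = 1 := by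
  intro t
  have hω' := hω.ne'
  have h1 : ω * (t + 2 * (Real.pi / (2 * ω))) = ω * t + Real.pi := by field_simp
  have h2 : 2 * ω * (t + 2 * (Real.pi / (2 * ω))) = 2 * ω * t + 2 * Real.pi := by
    field_simp
  have h3 : ω * (t + Real.pi / (2 * ω)) = ω * t + Real.pi / 2 := by field_simp
  have h4 : 2 * ω * (t + Real.pi / (2 * ω)) = 2 * ω * t + Real.pi := by field_simp
  have h5 : ω * (t + 3 * (Real.pi / (2 * ω))) = (ω * t + Real.pi / 2) + Real.pi := by
    field_simp; ring
  have h6 : 2 * ω * (t + 3 * (Real.pi / (2 * ω))) = (2 * ω * t + Real.pi) + 2 * Real.pi := by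
    field_simp; ring
  constructor
  · apply norm_one_of_sq
    simp only [limax, PiLp.sub_apply, WithLp.equiv_symm_apply, PiLp.toLp_apply, Matrix.cons_val_zero,
      Matrix.cons_val_one, Matrix.head_cons, h1, h2, Real.cos_add_pi, Real.sin_add_pi,
      Real.cos_add_two_pi, Real.sin_add_two_pi]
    linear_combination Real.cos_sq_add_sin_sq (ω * t)
  · apply norm_one_of_sq
    simp only [limax, PiLp.sub_apply, WithLp.equiv_symm_apply, PiLp.toLp_apply, Matrix.cons_val_zero,
      Matrix.cons_val_one, Matrix.head_cons, h3, h4, h5, h6, Real.cos_add_pi, Real.sin_add_pi,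
      Real.cos_add_two_pi, Real.sin_add_two_pi]
    linear_combination Real.cos_sq_add_sin_sq (ω * t + Real.pi / 2)
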